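/- The multiset of 5 triples {1,2,3}, {1,2,4}, {1,3,4}, {2,3,4}, {5,6,7} is fair and non-special, yet it does not admit a nice two-coloring. -/
import Mathlib


/-- `f` is a *nice (total) `c`-coloring* of the multiset `T` of tuples: the color
classes `f j` sum to `T`, and for each color `j` and every element `i` appearing in
some tuple of `T` there is a tuple of color `j` not containing `i`. -/
def NiceColoring (c : ℕ) (T : Multiset (Finset ℕ+))
    (f : Fin c → Multiset (Finset ℕ+)) : Prop :=
  (∑ j, f j) = T ∧
  ∀ j : Fin c, ∀ i : ℕ+, (∃ t ∈ T, i ∈ t) → ∃ t ∈ f j, i ∉ t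

/-- `T` is *`c`-fair*: every element appearing in some tuple of `T` is absent from at
least `c` of the tuples (counted with multiplicity). -/
def CFair (c : ℕ) (T : Multiset (Finset ℕ+)) : Prop :=
  ∀ i : ℕ+, (∃ t ∈ T, i ∈ t) →
    c ≤ Multiset.card (T.filter (fun t => i ∉ t))

/-- A multiset `T` of `n` triples is *special*: for some three distinct elements
`a, b, c` it consists of `n - 3` copies of the triple `{a, b, c}` together with three
further triples, one containing `a`, one containing `b` and one containing `c`, whose
other elements are distinct from `a`, `b`, `c`. -/
def Special (T : Multiset (Finset ℕ+)) : Prop :=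
  ∃ a b c : ℕ+, a ≠ b ∧ a ≠ c ∧ b ≠ c ∧
    ∃ t₁ t₂ t₃ : Finset ℕ+,
      T = Multiset.replicate (Multiset.card T - 3) {a, b, c} + {t₁, t₂, t₃} ∧
      a ∈ t₁ ∧ b ∉ t₁ ∧ c ∉ t₁ ∧
      a ∉ t₂ ∧ b ∈ t₂ ∧ c ∉ t₂ ∧
      a ∉ t₃ ∧ b ∉ t₃ ∧ c ∈ t₃

/-- The multiset of 5 triples `{1,2,3}, {1,2,4}, {1,3,4}, {2,3,4}, {5,6,7}`. -/
def exampleFive : Multiset (Finset ℕ+) :=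
  {{1, 2, 3}, {1, 2, 4}, {1, 3, 4}, {2, 3, 4}, {5, 6, 7}}

lemma mem_exampleFive {t : Finset ℕ+} (h : t ∈ exampleFive) :
    t = {1,2,3} ∨ t = {1,2,4} ∨ t = {1,3,4} ∨ t = {2,3,4} ∨ t = {5,6,7} := by
  simpa [exampleFive] using h

lemma exampleFive_aux (g h : Multiset (Finset ℕ+)) (hT : g + h = exampleFive)
    (h567 : ({5,6,7} : Finset ℕ+) ∉ h)
    (hg : ∀ i : ℕ+, (∃ t ∈ exampleFive, i ∈ t) → ∃ t ∈ g, i ∉ t)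
    (hh : ∀ i : ℕ+, (∃ t ∈ exampleFive, i ∈ t) → ∃ t ∈ h, i ∉ t) : False := by
  have hmemh : ∀ t ∈ h, t ∈ exampleFive := fun t ht => hT ▸ Multiset.mem_add.mpr (Or.inr ht)
  have hmemg : ∀ t ∈ g, t ∈ exampleFive := fun t ht => hT ▸ Multiset.mem_add.mpr (Or.inl ht)
  have key : ∀ i : ℕ+, i = 1 ∨ i = 2 ∨ i = 3 ∨ i = 4 →
      ∃ t ∈ h, i ∉ t ∧ t ≠ ({5,6,7} : Finset ℕ+) := by
    rintro i hi
    obtain ⟨t, ht, hit⟩ := hh i (by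
      rcases hi with rfl | rfl | rfl | rfl
      · exact ⟨{1,2,3}, by decide, by decide⟩
      · exact ⟨{1,2,3}, by decide, by decide⟩
      · exact ⟨{1,2,3}, by decide, by decide⟩
      · exact ⟨{1,2,4}, by decide, by decide⟩)
    exact ⟨t, ht, hit, fun he => h567 (he ▸ ht)⟩
  have h234 : ({2,3,4} : Finset ℕ+) ∈ h := by
    obtain ⟨t, ht, hit, hne⟩ := key 1 (Or.inl rfl)
    rcases mem_exampleFive (hmemh t ht) with rfl | rfl | rfl | rfl | rfl <;>
      first | exact ht | exact absurd (by decide) hit | exact absurd rfl hne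
  have h134 : ({1,3,4} : Finset ℕ+) ∈ h := by
    obtain ⟨t, ht, hit, hne⟩ := key 2 (by tauto)
    rcases mem_exampleFive (hmemh t ht) with rfl | rfl | rfl | rfl | rfl <;>
      first | exact ht | exact absurd (by decide) hit | exact absurd rfl hne
  have h124 : ({1,2,4} : Finset ℕ+) ∈ h := by
    obtain ⟨t, ht, hit, hne⟩ := key 3 (by tauto)
    rcases mem_exampleFive (hmemh t ht) with rfl | rfl | rfl | rfl | rfl <;>
      first | exact ht | exact absurd (by decide) hit | exact absurd rfl hne
  have h123 : ({1,2,3} : Finset ℕ+) ∈ h := by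
    obtain ⟨t, ht, hit, hne⟩ := key 4 (by tauto)
    rcases mem_exampleFive (hmemh t ht) with rfl | rfl | rfl | rfl | rfl <;>
      first | exact ht | exact absurd (by decide) hit | exact absurd rfl hne
  obtain ⟨t, htg, h5t⟩ := hg 5 ⟨{5,6,7}, by decide, by decide⟩
  have hth : t ∈ h := by
    rcases mem_exampleFive (hmemg t htg) with rfl | rfl | rfl | rfl | rfl <;>
      first | assumption | exact absurd (by decide) h5t
  have hc1 : Multiset.count t exampleFive ≤ 1 :=
    Multiset.nodup_iff_count_le_one.mp (by decide) _
  rw [← hT, Multiset.count_add] at hc1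
  have := Multiset.one_le_count_iff_mem.mpr htg
  have := Multiset.one_le_count_iff_mem.mpr hth
  omega

/-- The multiset of 5 triples `{1,2,3}, {1,2,4}, {1,3,4}, {2,3,4}, {5,6,7}` is fair
and non-special, yet it does not admit a nice two-coloring. -/
theorem exampleFive_fair_nonspecial_no_nice_two_coloring :
    CFair 2 exampleFive ∧ ¬ Special exampleFive ∧
      ¬ ∃ f : Fin 2 → Multiset (Finset ℕ+), NiceColoring 2 exampleFive f := by
  refine ⟨?_, ?_, ?_⟩
  · rintro i ⟨t, ht, hit⟩
    simp only [exampleFive, Multiset.insert_eq_cons, Multiset.mem_cons,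
      Multiset.mem_singleton] at ht
    rcases ht with rfl | rfl | rfl | rfl | rfl <;>
      simp only [Finset.mem_insert, Finset.mem_singleton] at hit <;>
      rcases hit with rfl | rfl | rfl <;> decide
  · rintro ⟨a, b, c, -, -, -, t₁, t₂, t₃, hT, -⟩
    have hnd : exampleFive.Nodup := by decide
    have hcard : Multiset.card exampleFive = 5 := by decide
    have h1 : Multiset.count ({a,b,c} : Finset ℕ+) exampleFive ≤ 1 :=
      Multiset.nodup_iff_count_le_one.mp hnd _
    rw [hT, hcard] at h1
    rw [Multiset.count_add, Multiset.count_replicate, if_pos rfl] at h1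
    omega
  · rintro ⟨f, hsum, hnice⟩
    rw [Fin.sum_univ_two] at hsum
    have hcnt : Multiset.count ({5,6,7} : Finset ℕ+) (f 0) +
        Multiset.count ({5,6,7} : Finset ℕ+) (f 1) = 1 := by
      rw [← Multiset.count_add, hsum]; decide
    rcases Nat.eq_zero_or_pos (Multiset.count ({5,6,7} : Finset ℕ+) (f 1)) with h0 | h0
    · exact exampleFive_aux (f 0) (f 1) hsum
        (by simpa [Multiset.count_eq_zero] using h0) (hnice 0) (hnice 1)
    · have h0' : Multiset.count ({5,6,7} : Finset ℕ+) (f 0) = 0 := by omega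
      exact exampleFive_aux (f 1) (f 0) (by rw [add_comm]; exact hsum)
        (by simpa [Multiset.count_eq_zero] using h0') (hnice 1) (hnice 0)
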